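/- For all integers n ≥ 1, q ≥ 2, 0 ≤ a ≤ n, and 0 ≤ b < ⌊q/2⌋, the code C_NBVT^q(n;a,b) = {c ∈ Σ_q^n : Σ_{i=1}^n i·(c_i mod 2) ≡ a (mod n+1) and Σ_{i=1}^n ⌊c_i/2⌋ ≡ b (mod ⌊q/2⌋)} is a single-deletion-covering code: every y ∈ Σ_q^{n−1} is a subsequence of some c ∈ C_NBVT^q(n;a,b). -/

import Mathlib

/-- Weighted sum `∑ (i+1) * l_i` of a list of naturals. -/
private def Vw : List ℕ → ℕ
  | [] => 0
  | x :: t => x + t.sum + Vw t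

private lemma Vw_append (u v : List ℕ) :
    Vw (u ++ v) = Vw u + u.length * v.sum + Vw v := by
  induction u with
  | nil => simp [Vw]
  | cons x t ih =>
    have h1 : (x :: t) ++ v = x :: (t ++ v) := rfl
    have h2 : Vw (x :: (t ++ v)) = x + (t ++ v).sum + Vw (t ++ v) := rfl
    have h3 : Vw (x :: t) = x + t.sum + Vw t := rfl
    rw [h1, h2, List.sum_append, ih, h3, List.length_cons]
    ring

private lemma sum_getD {α : Type*} (l : List α) (d : α) (f : α → ℕ) :
    ∑ i ∈ Finset.range l.length, f (l.getD i d) = (l.map f).sum := by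
  induction l with
  | nil => simp
  | cons x t ih =>
    rw [List.length_cons, Finset.sum_range_succ']
    simp only [List.getD_cons_succ, List.getD_cons_zero, List.map_cons, List.sum_cons]
    rw [ih]
    ring

private lemma wsum_getD {α : Type*} (l : List α) (d : α) (f : α → ℕ) :
    ∑ i ∈ Finset.range l.length, (i + 1) * f (l.getD i d) = Vw (l.map f) := by
  induction l with
  | nil => simp [Vw]
  | cons x t ih =>
    rw [List.length_cons, Finset.sum_range_succ']
    simp only [List.getD_cons_succ, List.getD_cons_zero, List.map_cons]
    have h : ∀ i, (i + 1 + 1) * f (t.getD i d)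
        = (i + 1) * f (t.getD i d) + f (t.getD i d) := by intro i; ring
    simp only [h, Finset.sum_add_distrib, ih, sum_getD t d f]
    have h2 : Vw (f x :: List.map f t)
        = f x + (List.map f t).sum + Vw (List.map f t) := rfl
    rw [h2]
    ring

private lemma ivt_nat (f : ℕ → ℕ) (m t : ℕ) (h0 : f 0 ≤ t) (hm : t ≤ f m)
    (hstep : ∀ p, f (p + 1) ≤ f p + 1) : ∃ p ≤ m, f p = t := by
  induction m with
  | zero => exact ⟨0, le_refl 0, le_antisymm h0 hm⟩
  | succ m ih =>
    by_cases h : t ≤ f m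
    · obtain ⟨p, hp, hfp⟩ := ih h
      exact ⟨p, hp.trans (Nat.le_succ m), hfp⟩
    · push_neg at h
      have := hstep m
      exact ⟨m + 1, le_refl _, by omega⟩

private lemma exists_insert_value (x : List ℕ) (hx : ∀ z ∈ x, z ≤ 1) (t : ℕ)
    (ht : t ≤ x.length + 1) :
    ∃ p, p ≤ x.length ∧ ∃ ε, ε ≤ 1 ∧ (x.drop p).sum + (p + 1) * ε = t := by
  set m := x.length with hm
  have hmono : ∀ p, (x.drop (p + 1)).sum ≤ (x.drop p).sum ∧
      (x.drop p).sum ≤ (x.drop (p + 1)).sum + 1 := by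
    intro p
    by_cases hp : p < m
    · have hdrop : x.drop p = x[p] :: x.drop (p + 1) := List.drop_eq_getElem_cons hp
      have h1 : x[p] ≤ 1 := hx _ (List.getElem_mem hp)
      rw [hdrop, List.sum_cons]
      omega
    · have h1 : x.drop p = [] := List.drop_eq_nil_of_le (by omega)
      have h2 : x.drop (p + 1) = [] := List.drop_eq_nil_of_le (by omega)
      rw [h1, h2]
      simp
  have hRm : (x.drop m).sum = 0 := by rw [hm]; simp
  have hwle : x.sum ≤ m := by
    have := List.sum_le_card_nsmul x 1 hx
    simpa using this
  by_cases hcase : t ≤ x.sum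
  · -- insert a 0, downward IVT
    obtain ⟨p, hpm, hfp⟩ := ivt_nat (fun p => (x.drop (m - p)).sum) m t
      (by
        show (x.drop (m - 0)).sum ≤ t
        rw [Nat.sub_zero, hRm]
        exact Nat.zero_le t)
      (by
        show t ≤ (x.drop (m - m)).sum
        rw [Nat.sub_self, List.drop_zero]
        exact hcase)
      (by
        intro p
        show (x.drop (m - (p + 1))).sum ≤ (x.drop (m - p)).sum + 1
        rcases le_or_gt m p with h | h
        · have he : m - (p + 1) = m - p := by omega
          rw [he]
          omega
        · have h2 : m - p = (m - (p + 1)) + 1 := by omega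
          rw [h2]
          exact (hmono _).2)
    have hfp' : (x.drop (m - p)).sum = t := hfp
    exact ⟨m - p, by omega, 0, by omega, by omega⟩
  · -- insert a 1, upward IVT
    push_neg at hcase
    obtain ⟨p, hpm, hfp⟩ := ivt_nat (fun p => p + (x.drop p).sum) m (t - 1)
      (by
        show 0 + (x.drop 0).sum ≤ t - 1
        rw [List.drop_zero]
        omega)
      (by
        show t - 1 ≤ m + (x.drop m).sum
        rw [hRm]
        omega)
      (by
        intro p
        show p + 1 + (x.drop (p + 1)).sum ≤ p + (x.drop p).sum + 1
        have := (hmono p).1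
        omega)
    have hfp' : p + (x.drop p).sum = t - 1 := hfp
    exact ⟨p, hpm, 1, le_refl 1, by omega⟩

private lemma mod_trick (N S aa : ℕ) (hN : 0 < N) (haa : aa < N) :
    (S + (aa + N - S % N) % N) % N = aa := by
  have hr : S % N < N := Nat.mod_lt _ hN
  have h1 : (S + (aa + N - S % N) % N) % N = (S % N + (aa + N - S % N) % N) % N :=
    Nat.ModEq.add_right _ (Nat.mod_modEq S N).symm
  have h2 : (S % N + (aa + N - S % N) % N) % N = (S % N + (aa + N - S % N)) % N :=
    Nat.ModEq.add_left _ (Nat.mod_modEq _ N)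
  have h3 : S % N + (aa + N - S % N) = aa + N := by omega
  rw [h1, h2, h3, Nat.add_mod_right, Nat.mod_eq_of_lt haa]

/-- The non-binary VT code `C_NBVT^q(n;a,b)` is a single-deletion-covering code:
every `y ∈ Σ_q^(n-1)` is a subsequence of some codeword `c ∈ Σ_q^n` satisfying
`∑_{i=1}^n i·(c_i mod 2) ≡ a (mod n+1)` and `∑_{i=1}^n ⌊c_i/2⌋ ≡ b (mod ⌊q/2⌋)`. -/
theorem nbvt_is_single_deletion_covering (n q a b : ℕ) (hn : 1 ≤ n) (hq : 2 ≤ q)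
    (ha : a ≤ n) (hb : b < q / 2) :
    ∀ y : List (Fin q), y.length = n - 1 →
      ∃ c : List (Fin q), c.length = n ∧
        (∑ i ∈ Finset.range n,
          (i + 1) * (((c.getD i ⟨0, by omega⟩ : Fin q) : ℕ) % 2)) % (n + 1) = a ∧
        (∑ i ∈ Finset.range n,
          ((c.getD i ⟨0, by omega⟩ : Fin q) : ℕ) / 2) % (q / 2) = b ∧
        y.Sublist c := by
  intro y hy
  set d := q / 2 with hd
  have hd1 : 1 ≤ d := by rw [hd]; omega
  set x := y.map (fun z : Fin q => (z : ℕ) % 2) with hxdef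
  have hx1 : ∀ z ∈ x, z ≤ 1 := by
    intro z hz
    rw [hxdef, List.mem_map] at hz
    obtain ⟨w, _, rfl⟩ := hz
    omega
  have hxl : x.length = n - 1 := by simp [hxdef, hy]
  set S := Vw x with hS
  set t := (a + (n + 1) - S % (n + 1)) % (n + 1) with htdef
  have ht : t ≤ x.length + 1 := by
    have h : t < n + 1 := Nat.mod_lt _ (by omega)
    omega
  obtain ⟨p, hpm, ε, hε, hins⟩ := exists_insert_value x hx1 t ht
  set Y := (y.map (fun z : Fin q => (z : ℕ) / 2)).sum with hY
  set v := (b + d - Y % d) % d with hvdef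
  have hvlt : v < d := Nat.mod_lt _ (by omega)
  have hs : 2 * v + ε < q := by
    have h2 : d * 2 ≤ q := Nat.div_mul_le_self q 2
    omega
  set s : Fin q := ⟨2 * v + ε, hs⟩ with hsdef
  have hyp : p ≤ y.length := by
    rw [hxdef, List.length_map] at hpm
    exact hpm
  have hlen : (y.take p ++ s :: y.drop p).length = n := by
    simp only [List.length_append, List.length_cons, List.length_take, List.length_drop]
    omega
  refine ⟨y.take p ++ s :: y.drop p, hlen, ?_, ?_, ?_⟩
  · -- first congruence
    have hw : (∑ i ∈ Finset.range n,
          (i + 1) * ((((y.take p ++ s :: y.drop p).getD i ⟨0, by omega⟩ : Fin q) : ℕ) % 2))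
        = Vw ((y.take p ++ s :: y.drop p).map (fun z : Fin q => (z : ℕ) % 2)) := by
      rw [← hlen]
      exact wsum_getD (y.take p ++ s :: y.drop p) ⟨0, by omega⟩ (fun z : Fin q => (z : ℕ) % 2)
    have hmap : (y.take p ++ s :: y.drop p).map (fun z : Fin q => (z : ℕ) % 2)
        = x.take p ++ ε :: x.drop p := by
      simp only [List.map_append, List.map_cons, List.map_take, List.map_drop, ← hxdef]
      congr 2
      show (2 * v + ε) % 2 = ε
      omega
    rw [hw, hmap, Vw_append]
    have hx_split : Vw x = Vw (x.take p) + p * (x.drop p).sum + Vw (x.drop p) := by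
      conv_lhs => rw [← List.take_append_drop p x]
      rw [Vw_append, List.length_take, min_eq_left hpm]
    have hVcons : Vw (ε :: x.drop p) = ε + (x.drop p).sum + Vw (x.drop p) := rfl
    have hlt : (x.take p).length = p := by
      rw [List.length_take, min_eq_left hpm]
    rw [hVcons, hlt, List.sum_cons]
    have e1 : p * (ε + (x.drop p).sum) = p * ε + p * (x.drop p).sum := Nat.mul_add p _ _
    have e2 : (p + 1) * ε = p * ε + ε := by ring
    have htot : Vw (x.take p) + p * (ε + (x.drop p).sum)
        + (ε + (x.drop p).sum + Vw (x.drop p)) = S + t := by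
      omega
    rw [htot, htdef]
    exact mod_trick (n + 1) S a (by omega) (by omega)
  · -- second congruence
    have hw : (∑ i ∈ Finset.range n,
          (((y.take p ++ s :: y.drop p).getD i ⟨0, by omega⟩ : Fin q) : ℕ) / 2)
        = ((y.take p ++ s :: y.drop p).map (fun z : Fin q => (z : ℕ) / 2)).sum := by
      rw [← hlen]
      exact sum_getD (y.take p ++ s :: y.drop p) ⟨0, by omega⟩ (fun z : Fin q => (z : ℕ) / 2)
    have hmap : ((y.take p ++ s :: y.drop p).map (fun z : Fin q => (z : ℕ) / 2)).sum
        = Y + v := by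
      simp only [List.map_append, List.map_cons, List.sum_append, List.sum_cons]
      have h1 : (s : ℕ) / 2 = v := by
        show (2 * v + ε) / 2 = v
        omega
      have h2 : ((y.take p).map (fun z : Fin q => (z : ℕ) / 2)).sum
          + ((y.drop p).map (fun z : Fin q => (z : ℕ) / 2)).sum = Y := by
        rw [hY]
        conv_rhs => rw [← List.take_append_drop p y]
        rw [List.map_append, List.sum_append, List.map_take, List.map_drop]
      rw [h1, ← h2]
      ring
    rw [hw, hmap, hvdef]
    exact mod_trick d Y b (by omega) hb
  · conv_lhs => rw [← List.take_append_drop p y]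
    exact (List.sublist_cons_self s _).append_left _
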